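/- Let r ∈ ℓ²(ℤ) and for n > N let H(n) be Hilbert–Schmidt operators with H_* = sup_{n>N} ‖H(n)‖_{HS} < ∞. Then ∑_{n>N} n^{-2} [∑_{i,j≠±n} |(n-i)/(n+i)|^{1/2} |(n+j)/(n-j)|^{1/2} |r(n-i)||r(n+j)| |H_{ij}(n)|]² ≤ C H_*² ‖r‖² (E_N(r)² + ‖r‖²/N), where C is an absolute constant. -/

import Mathlib

open scoped BigOperators ENNReal
open MeasureTheory

noncomputable section

namespace WDSSE

noncomputable def rho (r : ℤ → ℂ) (k : ℤ) : ℝ≥0∞ := ENNReal.ofReal ‖r k‖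

noncomputable def Afun (r : ℤ → ℂ) (n : ℕ) : ℝ≥0∞ :=
  ∑' k : ℤ, ENNReal.ofReal |(k : ℝ) / (2 * (n : ℝ) - (k : ℝ))| * rho r k ^ 2

noncomputable def Cfun (r : ℤ → ℂ) (n : ℕ) : ℝ≥0∞ :=
  ∑' k : ℤ, (if (n:ℤ) < |k| then ENNReal.ofReal (1 / |2 * (n:ℝ) - (k:ℝ)|) * rho r k ^ 2 else 0)

noncomputable def Dfun (r : ℤ → ℂ) (n : ℕ) : ℝ≥0∞ :=
  ∑' k : ℤ, (if (n:ℤ) < |k| then ENNReal.ofReal (1 / (2 * (n:ℝ) - (k:ℝ)) ^ 2) * rho r k ^ 2 else 0)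

lemma enn_cs {α : Type*} (f g : α → ℝ≥0∞) :
    (∑' i, f i * g i) ^ 2 ≤ (∑' i, f i ^ 2) * (∑' i, g i ^ 2) := by
  letI : MeasurableSpace α := ⊤
  haveI : MeasurableSingletonClass α := ⟨fun _ => trivial⟩
  have hm : ∀ h : α → ℝ≥0∞, AEMeasurable h (Measure.count : Measure α) :=
    fun h => Measurable.aemeasurable (fun s _ => trivial)
  have hpq : Real.HolderConjugate 2 2 := Real.HolderConjugate.two_two
  have h := ENNReal.lintegral_mul_le_Lp_mul_Lq (Measure.count : Measure α) hpq (hm f) (hm g)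
  simp only [Pi.mul_apply, lintegral_count] at h
  have h2 : (∑' i, f i * g i) ^ 2 ≤
      ((∑' i, f i ^ (2:ℝ)) ^ (1/(2:ℝ)) * (∑' i, g i ^ (2:ℝ)) ^ (1/(2:ℝ))) ^ 2 :=
    pow_le_pow_left' h 2
  calc (∑' i, f i * g i) ^ 2 ≤ _ := h2
    _ = (∑' i, f i ^ 2) * (∑' i, g i ^ 2) := by
        rw [mul_pow, ← ENNReal.rpow_natCast (_ ^ (1/(2:ℝ))), ← ENNReal.rpow_natCast (_ ^ (1/(2:ℝ))),
          ← ENNReal.rpow_mul, ← ENNReal.rpow_mul]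
        norm_num

lemma ofReal_tsum_le {α : Type*} {f : α → ℝ} (hf : ∀ a, 0 ≤ f a) :
    ENNReal.ofReal (∑' a, f a) ≤ ∑' a, ENNReal.ofReal (f a) := by
  by_cases h : Summable f
  · rw [ENNReal.ofReal_tsum_of_nonneg hf h]
  · rw [tsum_eq_zero_of_not_summable h]; simp

lemma sq_add_le_enn (x y : ℝ≥0∞) : (x + y) ^ 2 ≤ 4 * x ^ 2 + 4 * y ^ 2 := by
  have h : x + y ≤ 2 * max x y := by
    rcases le_total x y with h | h
    · calc x + y ≤ y + y := by gcongr
        _ = 2 * y := (two_mul y).symm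
        _ ≤ 2 * max x y := by gcongr; exact le_max_right _ _
    · calc x + y ≤ x + x := by gcongr
        _ = 2 * x := (two_mul x).symm
        _ ≤ 2 * max x y := by gcongr; exact le_max_left _ _
  calc (x + y) ^ 2 ≤ (2 * max x y) ^ 2 := pow_le_pow_left' h 2
    _ = 4 * (max x y) ^ 2 := by rw [mul_pow]; norm_num
    _ ≤ 4 * (x ^ 2 + y ^ 2) := by
        gcongr
        rcases le_total x y with h | h
        · rw [max_eq_right h]; exact le_add_self
        · rw [max_eq_left h]; exact le_self_add
    _ = 4 * x ^ 2 + 4 * y ^ 2 := by ring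

lemma inv_sq_tail_bound (N : ℕ) (hN : 1 ≤ N) :
    ∑' n : {n : ℕ // N < n}, ENNReal.ofReal (1 / (n.1 : ℝ) ^ 2) ≤ ENNReal.ofReal (2 / N) := by
  have hsum : Summable (fun n : ℕ => 1 / (n : ℝ) ^ 2) := by
    simpa using Real.summable_one_div_nat_pow.mpr (by norm_num : 1 < 2)
  have hsub : Summable (fun n : {n : ℕ // N < n} => 1 / (n.1 : ℝ) ^ 2) :=
    hsum.subtype _
  rw [← ENNReal.ofReal_tsum_of_nonneg (fun n => by positivity) hsub]
  apply ENNReal.ofReal_le_ofReal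
  apply hsub.tsum_le_of_sum_le
  intro s
  classical
  have hinj : Function.Injective (fun n : {n : ℕ // N < n} => n.1) := Subtype.val_injective
  set t := s.image (fun n : {n : ℕ // N < n} => n.1) with ht
  have : ∑ n ∈ s, 1 / (n.1 : ℝ) ^ 2 = ∑ m ∈ t, 1 / (m : ℝ) ^ 2 := by
    rw [ht, Finset.sum_image (fun a _ b _ h => hinj h)]
  rw [this]
  obtain ⟨M, hM⟩ : ∃ M, ∀ m ∈ t, m < M := ⟨(t.sup id) + 1, fun m hm =>
    Nat.lt_succ_of_le (Finset.le_sup (f := id) hm)⟩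
  have hsubset : t ⊆ Finset.Ioo N M := by
    intro m hm
    simp only [Finset.mem_Ioo]
    obtain ⟨n, _, rfl⟩ := Finset.mem_image.mp hm
    exact ⟨n.2, hM _ hm⟩
  calc ∑ m ∈ t, 1 / (m : ℝ) ^ 2 ≤ ∑ m ∈ Finset.Ioo N M, 1 / (m : ℝ) ^ 2 :=
        Finset.sum_le_sum_of_subset_of_nonneg hsubset (fun _ _ _ => by positivity)
    _ = ∑ m ∈ Finset.Ioo N M, ((m : ℝ) ^ 2)⁻¹ := by simp [one_div]
    _ ≤ 2 / ((N : ℝ) + 1) := by simpa using sum_Ioo_inv_sq_le (α := ℝ) N M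
    _ ≤ 2 / (N : ℝ) := by
        have h1 : (1:ℝ) ≤ (N:ℝ) := by exact_mod_cast hN
        apply div_le_div_of_nonneg_left (by norm_num) (by linarith) (by linarith)

lemma Kr_summable : Summable (fun m : ℤ => 1 / (m : ℝ) ^ 2) :=
  Real.summable_one_div_int_pow.mpr one_lt_two

lemma phi_bound (N : ℕ) (k : ℤ) :
    ∑' n : {n : ℕ // N < n}, ENNReal.ofReal (1 / (2 * (n.1 : ℝ) - (k : ℝ)) ^ 2) ≤
      ENNReal.ofReal (∑' m : ℤ, 1 / (m : ℝ) ^ 2) := by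
  have hinj : Function.Injective (fun n : {n : ℕ // N < n} => 2 * (n.1 : ℤ) - k) := by
    intro a b h
    simp only at h
    have : (a.1 : ℤ) = b.1 := by omega
    exact Subtype.ext (by exact_mod_cast this)
  calc ∑' n : {n : ℕ // N < n}, ENNReal.ofReal (1 / (2 * (n.1 : ℝ) - (k : ℝ)) ^ 2)
      = ∑' n : {n : ℕ // N < n},
          (fun m : ℤ => ENNReal.ofReal (1 / (m : ℝ) ^ 2)) (2 * (n.1 : ℤ) - k) := by
        apply tsum_congr; intro n; congr 2; push_cast; ring
    _ ≤ ∑' m : ℤ, ENNReal.ofReal (1 / (m : ℝ) ^ 2) :=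
        ENNReal.tsum_comp_le_tsum_of_injective hinj _
    _ = ENNReal.ofReal (∑' m : ℤ, 1 / (m : ℝ) ^ 2) :=
        (ENNReal.ofReal_tsum_of_nonneg (fun m => by positivity) Kr_summable).symm

lemma ratio_bound (n : ℕ) (k : ℤ) (hn : 0 < n) :
    |(k : ℝ) / (2 * (n : ℝ) - (k : ℝ))| ≤
      if (n : ℤ) < |k| then 1 + 2 * (n : ℝ) / |2 * (n : ℝ) - (k : ℝ)| else 1 := by
  rcases eq_or_ne k (2 * (n : ℤ)) with rfl | hk
  · rw [show (2 * (n:ℝ) - ((2 * (n:ℤ) : ℤ) : ℝ)) = 0 by push_cast; ring, div_zero, abs_zero]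
    split_ifs <;> positivity
  · have hd : (1 : ℝ) ≤ |2 * (n : ℝ) - (k : ℝ)| := by
      have h1 : (1 : ℤ) ≤ |2 * (n : ℤ) - k| := Int.one_le_abs (by omega)
      calc (1:ℝ) ≤ ((|2 * (n:ℤ) - k| : ℤ) : ℝ) := by exact_mod_cast h1
        _ = |2 * (n:ℝ) - (k:ℝ)| := by rw [Int.cast_abs]; push_cast; ring_nf
    have hdpos : (0 : ℝ) < |2 * (n : ℝ) - (k : ℝ)| := by linarith
    rw [abs_div]
    split_ifs with h
    · have hkb : |(k : ℝ)| ≤ 2 * (n : ℝ) + |2 * (n : ℝ) - (k : ℝ)| := by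
        have h2 : |(2 * (n:ℝ)) - (2 * (n:ℝ) - (k:ℝ))| ≤ |2 * (n:ℝ)| + |2 * (n:ℝ) - (k:ℝ)| :=
          abs_sub _ _
        have h3 : (2 * (n:ℝ)) - (2 * (n:ℝ) - (k:ℝ)) = (k:ℝ) := by ring
        rw [h3, abs_of_nonneg (by positivity : (0:ℝ) ≤ 2 * (n:ℝ))] at h2
        exact h2
      rw [div_le_iff₀ hdpos]
      have : (1 + 2 * (n:ℝ) / |2*(n:ℝ) - (k:ℝ)|) * |2*(n:ℝ) - (k:ℝ)|
          = |2*(n:ℝ) - (k:ℝ)| + 2 * (n:ℝ) := by field_simp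
      rw [this]; linarith
    · push_neg at h
      have hk2 : |(k : ℝ)| ≤ (n : ℝ) := by
        calc |(k:ℝ)| = ((|k| : ℤ) : ℝ) := by rw [Int.cast_abs]
          _ ≤ (n : ℝ) := by exact_mod_cast h
      rw [div_le_one hdpos]
      have h4 : 2 * (n:ℝ) - |(k:ℝ)| ≤ |2 * (n:ℝ) - (k:ℝ)| := by
        have h5 := abs_sub_abs_le_abs_sub (2 * (n:ℝ)) (k : ℝ)
        rw [abs_of_nonneg (by positivity : (0:ℝ) ≤ 2 * (n:ℝ))] at h5
        linarith
      have hn1 : (1:ℝ) ≤ (n:ℝ) := by exact_mod_cast hn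
      linarith

lemma reindexA (r : ℤ → ℂ) (n : ℕ) :
    ∑' i : ℤ, ENNReal.ofReal |((n:ℝ) - (i:ℝ)) / ((n:ℝ) + (i:ℝ))| * rho r ((n:ℤ) - i) ^ 2
      = Afun r n := by
  rw [Afun, ← Equiv.tsum_eq (Equiv.subLeft (n : ℤ))]
  apply tsum_congr; intro k
  simp only [Equiv.subLeft_apply]
  congr 2
  · push_cast; ring_nf
  · congr 1; ring

lemma reindexB (r : ℤ → ℂ) (n : ℕ) :
    ∑' j : ℤ, ENNReal.ofReal |((n:ℝ) + (j:ℝ)) / ((n:ℝ) - (j:ℝ))| * rho r ((n:ℤ) + j) ^ 2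
      = Afun r n := by
  rw [Afun, ← Equiv.tsum_eq (Equiv.subRight (n : ℤ))]
  apply tsum_congr; intro k
  simp only [Equiv.subRight_apply]
  congr 2
  · push_cast; ring_nf
  · congr 1; ring

lemma Abound (r : ℤ → ℂ) (n : ℕ) (hn : 0 < n) :
    Afun r n ≤ (∑' k : ℤ, rho r k ^ 2) + ENNReal.ofReal (2 * (n:ℝ)) * Cfun r n := by
  have hpt : ∀ k : ℤ,
      ENNReal.ofReal |(k : ℝ) / (2 * (n : ℝ) - (k : ℝ))| * rho r k ^ 2
        ≤ rho r k ^ 2 + (if (n:ℤ) < |k| then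
            ENNReal.ofReal (2 * (n:ℝ)) * (ENNReal.ofReal (1 / |2 * (n:ℝ) - (k:ℝ)|) * rho r k ^ 2)
          else 0) := by
    intro k
    have h := ratio_bound n k hn
    split_ifs at h ⊢ with hc
    · calc ENNReal.ofReal |(k : ℝ) / (2 * (n : ℝ) - (k : ℝ))| * rho r k ^ 2
          ≤ ENNReal.ofReal (1 + 2 * (n : ℝ) / |2 * (n : ℝ) - (k : ℝ)|) * rho r k ^ 2 := by
            gcongr
        _ = rho r k ^ 2 + ENNReal.ofReal (2 * (n:ℝ)) *
              (ENNReal.ofReal (1 / |2 * (n:ℝ) - (k:ℝ)|) * rho r k ^ 2) := by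
            rw [ENNReal.ofReal_add (by norm_num) (by positivity), ENNReal.ofReal_one,
              add_mul, one_mul,
              show 2 * (n:ℝ) / |2 * (n:ℝ) - (k:ℝ)| = 2 * (n:ℝ) * (1 / |2 * (n:ℝ) - (k:ℝ)|) by ring,
              ENNReal.ofReal_mul (by positivity), mul_assoc]
    · calc ENNReal.ofReal |(k : ℝ) / (2 * (n : ℝ) - (k : ℝ))| * rho r k ^ 2
          ≤ ENNReal.ofReal 1 * rho r k ^ 2 := by gcongr
        _ = rho r k ^ 2 + 0 := by rw [ENNReal.ofReal_one, one_mul, add_zero]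
  calc Afun r n ≤ ∑' k : ℤ, (rho r k ^ 2 + (if (n:ℤ) < |k| then
          ENNReal.ofReal (2 * (n:ℝ)) * (ENNReal.ofReal (1 / |2 * (n:ℝ) - (k:ℝ)|) * rho r k ^ 2)
        else 0)) := ENNReal.tsum_le_tsum hpt
    _ = (∑' k : ℤ, rho r k ^ 2) + ∑' k : ℤ, (if (n:ℤ) < |k| then
          ENNReal.ofReal (2 * (n:ℝ)) * (ENNReal.ofReal (1 / |2 * (n:ℝ) - (k:ℝ)|) * rho r k ^ 2)
        else 0) := ENNReal.tsum_add
    _ = (∑' k : ℤ, rho r k ^ 2) + ENNReal.ofReal (2 * (n:ℝ)) * Cfun r n := by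
        congr 1
        rw [Cfun, ← ENNReal.tsum_mul_left]
        apply tsum_congr; intro k
        split_ifs <;> simp

lemma Csq (r : ℤ → ℂ) (N n : ℕ) (hNn : N < n) :
    Cfun r n ^ 2 ≤ (∑' k : ℤ, (if (N:ℤ) ≤ |k| then rho r k ^ 2 else 0)) * Dfun r n := by
  have h1 : Cfun r n = ∑' k, (if (n:ℤ) < |k| then rho r k else 0) *
      (if (n:ℤ) < |k| then ENNReal.ofReal (1 / |2 * (n:ℝ) - (k:ℝ)|) * rho r k else 0) := by
    rw [Cfun]; apply tsum_congr; intro k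
    split_ifs with hc
    · ring
    · simp
  have h2 : ∀ k : ℤ, (if (n:ℤ) < |k| then rho r k else 0) ^ 2 ≤
      (if (N:ℤ) ≤ |k| then rho r k ^ 2 else 0) := by
    intro k; split_ifs with hc hc2
    · exact le_rfl
    · exact absurd (by omega : (N:ℤ) ≤ |k|) hc2
    · simp
    · simp
  have h3 : ∀ k : ℤ,
      (if (n:ℤ) < |k| then ENNReal.ofReal (1 / |2 * (n:ℝ) - (k:ℝ)|) * rho r k else 0) ^ 2 =
      (if (n:ℤ) < |k| then ENNReal.ofReal (1 / (2 * (n:ℝ) - (k:ℝ)) ^ 2) * rho r k ^ 2 else 0) := by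
    intro k; split_ifs with hc
    · rw [mul_pow, ← ENNReal.ofReal_pow (by positivity), div_pow, one_pow, sq_abs]
    · simp
  rw [h1]
  calc _ ≤ (∑' k : ℤ, (if (n:ℤ) < |k| then rho r k else 0) ^ 2) *
        (∑' k : ℤ, (if (n:ℤ) < |k| then ENNReal.ofReal (1 / |2 * (n:ℝ) - (k:ℝ)|) * rho r k else 0) ^ 2) :=
        enn_cs _ _
    _ ≤ (∑' k : ℤ, (if (N:ℤ) ≤ |k| then rho r k ^ 2 else 0)) * Dfun r n := by
        gcongr with k
        · exact h2 k
        · rw [Dfun]; exact le_of_eq (tsum_congr h3)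

lemma Dsum (r : ℤ → ℂ) (N : ℕ) :
    ∑' n : {n : ℕ // N < n}, Dfun r n.1 ≤
      ENNReal.ofReal (∑' m : ℤ, 1 / (m : ℝ) ^ 2) * ∑' k : ℤ, rho r k ^ 2 := by
  calc ∑' n : {n : ℕ // N < n}, Dfun r n.1
      ≤ ∑' (n : {n : ℕ // N < n}) (k : ℤ),
          ENNReal.ofReal (1 / (2 * (n.1:ℝ) - (k:ℝ)) ^ 2) * rho r k ^ 2 := by
        apply ENNReal.tsum_le_tsum; intro n
        rw [Dfun]; apply ENNReal.tsum_le_tsum; intro k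
        split_ifs
        · exact le_rfl
        · exact zero_le
    _ = ∑' (k : ℤ) (n : {n : ℕ // N < n}),
          ENNReal.ofReal (1 / (2 * (n.1:ℝ) - (k:ℝ)) ^ 2) * rho r k ^ 2 := ENNReal.tsum_comm
    _ ≤ ∑' k : ℤ, ENNReal.ofReal (∑' m : ℤ, 1 / (m : ℝ) ^ 2) * rho r k ^ 2 := by
        apply ENNReal.tsum_le_tsum; intro k
        rw [ENNReal.tsum_mul_right]
        gcongr
        exact phi_bound N k
    _ = ENNReal.ofReal (∑' m : ℤ, 1 / (m : ℝ) ^ 2) * ∑' k : ℤ, rho r k ^ 2 :=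
        ENNReal.tsum_mul_left

lemma innerCS (r : ℤ → ℂ) (Hn : ℤ → ℤ → ℂ) (n : ℕ) (Hstar : ℝ)
    (hH1 : Summable fun p : ℤ × ℤ => ‖Hn p.1 p.2‖ ^ 2)
    (hH2 : ∑' p : ℤ × ℤ, ‖Hn p.1 p.2‖ ^ 2 ≤ Hstar ^ 2) :
    (∑' p : {p : ℤ × ℤ // p.1 ≠ (n : ℤ) ∧ p.1 ≠ -(n : ℤ) ∧ p.2 ≠ (n : ℤ) ∧ p.2 ≠ -(n : ℤ)},
        ENNReal.ofReal (Real.sqrt |((n : ℝ) - (p.1.1 : ℝ)) / ((n : ℝ) + (p.1.1 : ℝ))| *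
          Real.sqrt |((n : ℝ) + (p.1.2 : ℝ)) / ((n : ℝ) - (p.1.2 : ℝ))| *
          ‖r ((n : ℤ) - p.1.1)‖ * ‖r ((n : ℤ) + p.1.2)‖ * ‖Hn p.1.1 p.1.2‖)) ^ 2
      ≤ Afun r n * Afun r n * ENNReal.ofReal (Hstar ^ 2) := by
  set a : ℤ → ℝ≥0∞ := fun i =>
    ENNReal.ofReal (Real.sqrt |((n:ℝ) - (i:ℝ)) / ((n:ℝ) + (i:ℝ))|) * rho r ((n:ℤ) - i) with ha
  set b : ℤ → ℝ≥0∞ := fun j =>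
    ENNReal.ofReal (Real.sqrt |((n:ℝ) + (j:ℝ)) / ((n:ℝ) - (j:ℝ))|) * rho r ((n:ℤ) + j) with hb
  have hterm : ∀ p : {p : ℤ × ℤ // p.1 ≠ (n : ℤ) ∧ p.1 ≠ -(n : ℤ) ∧ p.2 ≠ (n : ℤ) ∧ p.2 ≠ -(n : ℤ)},
      ENNReal.ofReal (Real.sqrt |((n : ℝ) - (p.1.1 : ℝ)) / ((n : ℝ) + (p.1.1 : ℝ))| *
          Real.sqrt |((n : ℝ) + (p.1.2 : ℝ)) / ((n : ℝ) - (p.1.2 : ℝ))| *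
          ‖r ((n : ℤ) - p.1.1)‖ * ‖r ((n : ℤ) + p.1.2)‖ * ‖Hn p.1.1 p.1.2‖)
        = (a p.1.1 * b p.1.2) * ENNReal.ofReal ‖Hn p.1.1 p.1.2‖ := by
    intro p
    rw [ENNReal.ofReal_mul (by positivity), ENNReal.ofReal_mul (by positivity),
      ENNReal.ofReal_mul (by positivity), ENNReal.ofReal_mul (by positivity)]
    rw [ha, hb]
    simp only [rho]
    ring
  rw [tsum_congr hterm]
  calc (∑' p : {p : ℤ × ℤ // p.1 ≠ (n : ℤ) ∧ p.1 ≠ -(n : ℤ) ∧ p.2 ≠ (n : ℤ) ∧ p.2 ≠ -(n : ℤ)},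
        (a p.1.1 * b p.1.2) * ENNReal.ofReal ‖Hn p.1.1 p.1.2‖) ^ 2
      ≤ (∑' p : {p : ℤ × ℤ // p.1 ≠ (n : ℤ) ∧ p.1 ≠ -(n : ℤ) ∧ p.2 ≠ (n : ℤ) ∧ p.2 ≠ -(n : ℤ)},
          (a p.1.1 * b p.1.2) ^ 2) *
        (∑' p : {p : ℤ × ℤ // p.1 ≠ (n : ℤ) ∧ p.1 ≠ -(n : ℤ) ∧ p.2 ≠ (n : ℤ) ∧ p.2 ≠ -(n : ℤ)},
          ENNReal.ofReal ‖Hn p.1.1 p.1.2‖ ^ 2) := enn_cs _ _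
    _ ≤ Afun r n * Afun r n * ENNReal.ofReal (Hstar ^ 2) := by
        gcongr
        · calc (∑' p : {p : ℤ × ℤ // p.1 ≠ (n : ℤ) ∧ p.1 ≠ -(n : ℤ) ∧ p.2 ≠ (n : ℤ) ∧ p.2 ≠ -(n : ℤ)},
              (a p.1.1 * b p.1.2) ^ 2)
              ≤ ∑' q : ℤ × ℤ, (a q.1 * b q.2) ^ 2 :=
                ENNReal.tsum_comp_le_tsum_of_injective Subtype.val_injective
                  (fun q : ℤ × ℤ => (a q.1 * b q.2) ^ 2)
            _ = (∑' i : ℤ, a i ^ 2) * (∑' j : ℤ, b j ^ 2) := by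
                rw [ENNReal.tsum_prod']
                simp only [mul_pow]
                rw [← ENNReal.tsum_mul_right]
                apply tsum_congr; intro i
                rw [ENNReal.tsum_mul_left]
            _ = Afun r n * Afun r n := by
                congr 1
                · rw [← reindexA r n]
                  apply tsum_congr; intro i
                  rw [ha, mul_pow, ← ENNReal.ofReal_pow (Real.sqrt_nonneg _),
                    Real.sq_sqrt (abs_nonneg _)]
                · rw [← reindexB r n]
                  apply tsum_congr; intro j
                  rw [hb, mul_pow, ← ENNReal.ofReal_pow (Real.sqrt_nonneg _),
                    Real.sq_sqrt (abs_nonneg _)]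
        · calc (∑' p : {p : ℤ × ℤ // p.1 ≠ (n : ℤ) ∧ p.1 ≠ -(n : ℤ) ∧ p.2 ≠ (n : ℤ) ∧ p.2 ≠ -(n : ℤ)},
              ENNReal.ofReal ‖Hn p.1.1 p.1.2‖ ^ 2)
              ≤ ∑' q : ℤ × ℤ, ENNReal.ofReal ‖Hn q.1 q.2‖ ^ 2 :=
                ENNReal.tsum_comp_le_tsum_of_injective Subtype.val_injective
                  (fun q : ℤ × ℤ => ENNReal.ofReal ‖Hn q.1 q.2‖ ^ 2)
            _ = ENNReal.ofReal (∑' q : ℤ × ℤ, ‖Hn q.1 q.2‖ ^ 2) := by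
                rw [ENNReal.ofReal_tsum_of_nonneg (fun q => by positivity) hH1]
                apply tsum_congr; intro q
                rw [ENNReal.ofReal_pow (norm_nonneg _)]
            _ ≤ ENNReal.ofReal (Hstar ^ 2) := ENNReal.ofReal_le_ofReal hH2

lemma Asq_bound (r : ℤ → ℂ) (n : ℕ) (hn : 0 < n) :
    ENNReal.ofReal (1 / (n:ℝ) ^ 2) * Afun r n ^ 2 ≤
      4 * ENNReal.ofReal (1 / (n:ℝ) ^ 2) * (∑' k : ℤ, rho r k ^ 2) ^ 2 + 16 * Cfun r n ^ 2 := by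
  have hnR : (0:ℝ) < (n:ℝ) := by exact_mod_cast hn
  have h1 : Afun r n ^ 2 ≤
      4 * (∑' k : ℤ, rho r k ^ 2) ^ 2 + 4 * (ENNReal.ofReal (2 * (n:ℝ)) * Cfun r n) ^ 2 :=
    (pow_le_pow_left' (Abound r n hn) 2).trans (sq_add_le_enn _ _)
  calc ENNReal.ofReal (1 / (n:ℝ) ^ 2) * Afun r n ^ 2
      ≤ ENNReal.ofReal (1 / (n:ℝ) ^ 2) *
        (4 * (∑' k : ℤ, rho r k ^ 2) ^ 2 + 4 * (ENNReal.ofReal (2 * (n:ℝ)) * Cfun r n) ^ 2) := by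
        gcongr
    _ = 4 * ENNReal.ofReal (1 / (n:ℝ) ^ 2) * (∑' k : ℤ, rho r k ^ 2) ^ 2 +
        (ENNReal.ofReal (1 / (n:ℝ) ^ 2) * ENNReal.ofReal ((2 * (n:ℝ)) ^ 2)) *
          (4 * Cfun r n ^ 2) := by
        rw [mul_pow, ← ENNReal.ofReal_pow (by positivity)]
        ring
    _ = 4 * ENNReal.ofReal (1 / (n:ℝ) ^ 2) * (∑' k : ℤ, rho r k ^ 2) ^ 2 + 16 * Cfun r n ^ 2 := by
        congr 1
        rw [← ENNReal.ofReal_mul (by positivity),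
          show (1 / (n:ℝ) ^ 2) * (2 * (n:ℝ)) ^ 2 = 4 by field_simp; ring]
        rw [show ENNReal.ofReal (4:ℝ) = 4 by norm_num]
        ring

end WDSSE

open WDSSE

/-- Lemma 3.2a of the paper. -/
theorem weighted_double_sum_series_estimate :
    ∃ C : ℝ, 0 < C ∧
      ∀ (N : ℕ), 1 ≤ N →
      ∀ (r : ℤ → ℂ) (H : ℕ → ℤ → ℤ → ℂ) (Hstar : ℝ),
        Summable (fun k => ‖r k‖ ^ 2) →
        (∀ n : ℕ, N < n → Summable (fun p : ℤ × ℤ => ‖H n p.1 p.2‖ ^ 2) ∧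
          Real.sqrt (∑' p : ℤ × ℤ, ‖H n p.1 p.2‖ ^ 2) ≤ Hstar) →
        (∑' n : {n : ℕ // N < n},
          (1 / (n.1 : ℝ) ^ 2) *
            (∑' p : {p : ℤ × ℤ // p.1 ≠ (n.1 : ℤ) ∧ p.1 ≠ -(n.1 : ℤ) ∧
                p.2 ≠ (n.1 : ℤ) ∧ p.2 ≠ -(n.1 : ℤ)},
              Real.sqrt |((n.1 : ℝ) - (p.1.1 : ℝ)) / ((n.1 : ℝ) + (p.1.1 : ℝ))| *
                Real.sqrt |((n.1 : ℝ) + (p.1.2 : ℝ)) / ((n.1 : ℝ) - (p.1.2 : ℝ))| *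
                ‖r ((n.1 : ℤ) - p.1.1)‖ * ‖r ((n.1 : ℤ) + p.1.2)‖ *
                ‖H n.1 p.1.1 p.1.2‖) ^ 2)
        ≤ C * Hstar ^ 2 * (∑' k : ℤ, ‖r k‖ ^ 2) *
            ((∑' k : {k : ℤ // (N : ℤ) ≤ |k|}, ‖r k.1‖ ^ 2) +
              (∑' k : ℤ, ‖r k‖ ^ 2) / (N : ℝ)) := by
  set Kr : ℝ := ∑' m : ℤ, 1 / (m : ℝ) ^ 2 with hKr
  have hKr0 : 0 ≤ Kr := tsum_nonneg (fun m => by positivity)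
  refine ⟨16 * Kr + 8, by linarith, ?_⟩
  intro N hN r H Hstar hr hH
  set Tr : ℝ := ∑' k : ℤ, ‖r k‖ ^ 2 with hTr
  set E2r : ℝ := ∑' k : {k : ℤ // (N : ℤ) ≤ |k|}, ‖r k.1‖ ^ 2 with hE2r
  have hTr0 : 0 ≤ Tr := tsum_nonneg (fun k => by positivity)
  have hE2r0 : 0 ≤ E2r := tsum_nonneg (fun k => by positivity)
  have hN0 : (0:ℝ) < (N:ℝ) := by exact_mod_cast Nat.lt_of_lt_of_le Nat.zero_lt_one hN
  have hRHS0 : 0 ≤ (16 * Kr + 8) * Hstar ^ 2 * Tr * (E2r + Tr / (N:ℝ)) := by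
    apply mul_nonneg (mul_nonneg (mul_nonneg (by linarith) (sq_nonneg _)) hTr0)
    exact add_nonneg hE2r0 (div_nonneg hTr0 hN0.le)
  rw [← ENNReal.ofReal_le_ofReal_iff hRHS0]
  -- ENNReal versions of the sums
  have hTE : (∑' k : ℤ, rho r k ^ 2) = ENNReal.ofReal Tr := by
    rw [hTr, ENNReal.ofReal_tsum_of_nonneg (fun k => by positivity) hr]
    exact tsum_congr (fun k => by rw [rho, ENNReal.ofReal_pow (norm_nonneg _)])
  have hE2sum : Summable (fun k : {k : ℤ // (N : ℤ) ≤ |k|} => ‖r k.1‖ ^ 2) := hr.subtype _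
  have hE2E : (∑' k : ℤ, (if (N:ℤ) ≤ |k| then rho r k ^ 2 else 0)) = ENNReal.ofReal E2r := by
    calc (∑' k : ℤ, (if (N:ℤ) ≤ |k| then rho r k ^ 2 else 0))
        = ∑' k : ℤ, Set.indicator {k : ℤ | (N:ℤ) ≤ |k|} (fun k => rho r k ^ 2) k := by
          apply tsum_congr; intro k
          simp [Set.indicator_apply, Set.mem_setOf_eq]
      _ = ∑' k : {k : ℤ | (N:ℤ) ≤ |k|}, rho r k.1 ^ 2 := (tsum_subtype _ _).symm
      _ = ENNReal.ofReal E2r := by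
          rw [hE2r, ENNReal.ofReal_tsum_of_nonneg (fun k => by positivity) hE2sum]
          exact tsum_congr (fun k => by rw [rho, ENNReal.ofReal_pow (norm_nonneg _)])
  -- the key per-n bound
  have key : ∀ n : {n : ℕ // N < n},
      ENNReal.ofReal ((1 / (n.1 : ℝ) ^ 2) *
        (∑' p : {p : ℤ × ℤ // p.1 ≠ (n.1 : ℤ) ∧ p.1 ≠ -(n.1 : ℤ) ∧
            p.2 ≠ (n.1 : ℤ) ∧ p.2 ≠ -(n.1 : ℤ)},
          Real.sqrt |((n.1 : ℝ) - (p.1.1 : ℝ)) / ((n.1 : ℝ) + (p.1.1 : ℝ))| *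
            Real.sqrt |((n.1 : ℝ) + (p.1.2 : ℝ)) / ((n.1 : ℝ) - (p.1.2 : ℝ))| *
            ‖r ((n.1 : ℤ) - p.1.1)‖ * ‖r ((n.1 : ℤ) + p.1.2)‖ *
            ‖H n.1 p.1.1 p.1.2‖) ^ 2) ≤
      (ENNReal.ofReal (Hstar ^ 2) * 4 * ENNReal.ofReal Tr ^ 2) *
          ENNReal.ofReal (1 / (n.1 : ℝ) ^ 2) +
        (ENNReal.ofReal (Hstar ^ 2) * 16) * Cfun r n.1 ^ 2 := by
    intro n
    obtain ⟨hH1, hH2'⟩ := hH n.1 n.2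
    have hn0 : 0 < n.1 := by have := n.2; omega
    have hH2 : ∑' p : ℤ × ℤ, ‖H n.1 p.1 p.2‖ ^ 2 ≤ Hstar ^ 2 := by
      have h0 : 0 ≤ ∑' p : ℤ × ℤ, ‖H n.1 p.1 p.2‖ ^ 2 := tsum_nonneg (fun p => by positivity)
      nlinarith [Real.sq_sqrt h0, Real.sqrt_nonneg (∑' p : ℤ × ℤ, ‖H n.1 p.1 p.2‖ ^ 2)]
    have hSnn : 0 ≤ ∑' p : {p : ℤ × ℤ // p.1 ≠ (n.1 : ℤ) ∧ p.1 ≠ -(n.1 : ℤ) ∧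
            p.2 ≠ (n.1 : ℤ) ∧ p.2 ≠ -(n.1 : ℤ)},
          Real.sqrt |((n.1 : ℝ) - (p.1.1 : ℝ)) / ((n.1 : ℝ) + (p.1.1 : ℝ))| *
            Real.sqrt |((n.1 : ℝ) + (p.1.2 : ℝ)) / ((n.1 : ℝ) - (p.1.2 : ℝ))| *
            ‖r ((n.1 : ℤ) - p.1.1)‖ * ‖r ((n.1 : ℤ) + p.1.2)‖ *
            ‖H n.1 p.1.1 p.1.2‖ := tsum_nonneg (fun p => by positivity)
    calc ENNReal.ofReal ((1 / (n.1 : ℝ) ^ 2) *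
          (∑' p : {p : ℤ × ℤ // p.1 ≠ (n.1 : ℤ) ∧ p.1 ≠ -(n.1 : ℤ) ∧
              p.2 ≠ (n.1 : ℤ) ∧ p.2 ≠ -(n.1 : ℤ)},
            Real.sqrt |((n.1 : ℝ) - (p.1.1 : ℝ)) / ((n.1 : ℝ) + (p.1.1 : ℝ))| *
              Real.sqrt |((n.1 : ℝ) + (p.1.2 : ℝ)) / ((n.1 : ℝ) - (p.1.2 : ℝ))| *
              ‖r ((n.1 : ℤ) - p.1.1)‖ * ‖r ((n.1 : ℤ) + p.1.2)‖ *
              ‖H n.1 p.1.1 p.1.2‖) ^ 2)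
        = ENNReal.ofReal (1 / (n.1 : ℝ) ^ 2) *
            ENNReal.ofReal (∑' p : {p : ℤ × ℤ // p.1 ≠ (n.1 : ℤ) ∧ p.1 ≠ -(n.1 : ℤ) ∧
                p.2 ≠ (n.1 : ℤ) ∧ p.2 ≠ -(n.1 : ℤ)},
              Real.sqrt |((n.1 : ℝ) - (p.1.1 : ℝ)) / ((n.1 : ℝ) + (p.1.1 : ℝ))| *
                Real.sqrt |((n.1 : ℝ) + (p.1.2 : ℝ)) / ((n.1 : ℝ) - (p.1.2 : ℝ))| *
                ‖r ((n.1 : ℤ) - p.1.1)‖ * ‖r ((n.1 : ℤ) + p.1.2)‖ *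
                ‖H n.1 p.1.1 p.1.2‖) ^ 2 := by
          rw [ENNReal.ofReal_mul (by positivity), ENNReal.ofReal_pow hSnn]
      _ ≤ ENNReal.ofReal (1 / (n.1 : ℝ) ^ 2) *
            (∑' p : {p : ℤ × ℤ // p.1 ≠ (n.1 : ℤ) ∧ p.1 ≠ -(n.1 : ℤ) ∧
                p.2 ≠ (n.1 : ℤ) ∧ p.2 ≠ -(n.1 : ℤ)},
              ENNReal.ofReal (Real.sqrt |((n.1 : ℝ) - (p.1.1 : ℝ)) / ((n.1 : ℝ) + (p.1.1 : ℝ))| *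
                Real.sqrt |((n.1 : ℝ) + (p.1.2 : ℝ)) / ((n.1 : ℝ) - (p.1.2 : ℝ))| *
                ‖r ((n.1 : ℤ) - p.1.1)‖ * ‖r ((n.1 : ℤ) + p.1.2)‖ *
                ‖H n.1 p.1.1 p.1.2‖)) ^ 2 := by
          gcongr
          exact ofReal_tsum_le (fun p => by positivity)
      _ ≤ ENNReal.ofReal (1 / (n.1 : ℝ) ^ 2) *
            (Afun r n.1 * Afun r n.1 * ENNReal.ofReal (Hstar ^ 2)) := by
          gcongr
          exact innerCS r (H n.1) n.1 Hstar hH1 hH2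
      _ = ENNReal.ofReal (Hstar ^ 2) *
            (ENNReal.ofReal (1 / (n.1 : ℝ) ^ 2) * Afun r n.1 ^ 2) := by ring
      _ ≤ ENNReal.ofReal (Hstar ^ 2) *
            (4 * ENNReal.ofReal (1 / (n.1 : ℝ) ^ 2) * (∑' k : ℤ, rho r k ^ 2) ^ 2 +
              16 * Cfun r n.1 ^ 2) := by
          gcongr
          exact Asq_bound r n.1 hn0
      _ = (ENNReal.ofReal (Hstar ^ 2) * 4 * ENNReal.ofReal Tr ^ 2) *
              ENNReal.ofReal (1 / (n.1 : ℝ) ^ 2) +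
            (ENNReal.ofReal (Hstar ^ 2) * 16) * Cfun r n.1 ^ 2 := by
          rw [hTE]; ring
  -- bound on sum of Cfun squares
  have hC2 : ∑' n : {n : ℕ // N < n}, Cfun r n.1 ^ 2 ≤
      ENNReal.ofReal E2r * (ENNReal.ofReal Kr * ENNReal.ofReal Tr) := by
    calc ∑' n : {n : ℕ // N < n}, Cfun r n.1 ^ 2
        ≤ ∑' n : {n : ℕ // N < n},
            ((∑' k : ℤ, (if (N:ℤ) ≤ |k| then rho r k ^ 2 else 0)) * Dfun r n.1) :=
          ENNReal.tsum_le_tsum (fun n => Csq r N n.1 n.2)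
      _ = (∑' k : ℤ, (if (N:ℤ) ≤ |k| then rho r k ^ 2 else 0)) *
            ∑' n : {n : ℕ // N < n}, Dfun r n.1 := ENNReal.tsum_mul_left
      _ ≤ (∑' k : ℤ, (if (N:ℤ) ≤ |k| then rho r k ^ 2 else 0)) *
            (ENNReal.ofReal (∑' m : ℤ, 1 / (m : ℝ) ^ 2) * ∑' k : ℤ, rho r k ^ 2) := by
          gcongr
          exact Dsum r N
      _ = ENNReal.ofReal E2r * (ENNReal.ofReal Kr * ENNReal.ofReal Tr) := by
          rw [hE2E, hTE, ← hKr]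
  -- main chain
  calc ENNReal.ofReal (∑' n : {n : ℕ // N < n},
          (1 / (n.1 : ℝ) ^ 2) *
            (∑' p : {p : ℤ × ℤ // p.1 ≠ (n.1 : ℤ) ∧ p.1 ≠ -(n.1 : ℤ) ∧
                p.2 ≠ (n.1 : ℤ) ∧ p.2 ≠ -(n.1 : ℤ)},
              Real.sqrt |((n.1 : ℝ) - (p.1.1 : ℝ)) / ((n.1 : ℝ) + (p.1.1 : ℝ))| *
                Real.sqrt |((n.1 : ℝ) + (p.1.2 : ℝ)) / ((n.1 : ℝ) - (p.1.2 : ℝ))| *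
                ‖r ((n.1 : ℤ) - p.1.1)‖ * ‖r ((n.1 : ℤ) + p.1.2)‖ *
                ‖H n.1 p.1.1 p.1.2‖) ^ 2)
      ≤ ∑' n : {n : ℕ // N < n}, ENNReal.ofReal ((1 / (n.1 : ℝ) ^ 2) *
            (∑' p : {p : ℤ × ℤ // p.1 ≠ (n.1 : ℤ) ∧ p.1 ≠ -(n.1 : ℤ) ∧
                p.2 ≠ (n.1 : ℤ) ∧ p.2 ≠ -(n.1 : ℤ)},
              Real.sqrt |((n.1 : ℝ) - (p.1.1 : ℝ)) / ((n.1 : ℝ) + (p.1.1 : ℝ))| *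
                Real.sqrt |((n.1 : ℝ) + (p.1.2 : ℝ)) / ((n.1 : ℝ) - (p.1.2 : ℝ))| *
                ‖r ((n.1 : ℤ) - p.1.1)‖ * ‖r ((n.1 : ℤ) + p.1.2)‖ *
                ‖H n.1 p.1.1 p.1.2‖) ^ 2) := ofReal_tsum_le (fun n => by positivity)
    _ ≤ ∑' n : {n : ℕ // N < n},
          ((ENNReal.ofReal (Hstar ^ 2) * 4 * ENNReal.ofReal Tr ^ 2) *
              ENNReal.ofReal (1 / (n.1 : ℝ) ^ 2) +
            (ENNReal.ofReal (Hstar ^ 2) * 16) * Cfun r n.1 ^ 2) :=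
        ENNReal.tsum_le_tsum key
    _ = (ENNReal.ofReal (Hstar ^ 2) * 4 * ENNReal.ofReal Tr ^ 2) *
          (∑' n : {n : ℕ // N < n}, ENNReal.ofReal (1 / (n.1 : ℝ) ^ 2)) +
        (ENNReal.ofReal (Hstar ^ 2) * 16) *
          (∑' n : {n : ℕ // N < n}, Cfun r n.1 ^ 2) := by
        rw [ENNReal.tsum_add, ENNReal.tsum_mul_left, ENNReal.tsum_mul_left]
    _ ≤ (ENNReal.ofReal (Hstar ^ 2) * 4 * ENNReal.ofReal Tr ^ 2) * ENNReal.ofReal (2 / (N:ℝ)) +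
        (ENNReal.ofReal (Hstar ^ 2) * 16) *
          (ENNReal.ofReal E2r * (ENNReal.ofReal Kr * ENNReal.ofReal Tr)) := by
        exact add_le_add (mul_le_mul_right (inv_sq_tail_bound N hN) _)
          (mul_le_mul_right hC2 _)
    _ ≤ ENNReal.ofReal ((16 * Kr + 8) * Hstar ^ 2 * Tr * (E2r + Tr / (N:ℝ))) := by
        have e1 : (ENNReal.ofReal (Hstar ^ 2) * 4 * ENNReal.ofReal Tr ^ 2) *
            ENNReal.ofReal (2 / (N:ℝ)) =
            ENNReal.ofReal (Hstar ^ 2 * 4 * Tr ^ 2 * (2 / (N:ℝ))) := by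
          rw [show (4:ℝ≥0∞) = ENNReal.ofReal (4:ℝ) by norm_num,
            ← ENNReal.ofReal_pow hTr0, ← ENNReal.ofReal_mul (by positivity),
            ← ENNReal.ofReal_mul (by positivity), ← ENNReal.ofReal_mul (by positivity)]
        have e2 : (ENNReal.ofReal (Hstar ^ 2) * 16) *
            (ENNReal.ofReal E2r * (ENNReal.ofReal Kr * ENNReal.ofReal Tr)) =
            ENNReal.ofReal (Hstar ^ 2 * 16 * (E2r * (Kr * Tr))) := by
          rw [show (16:ℝ≥0∞) = ENNReal.ofReal (16:ℝ) by norm_num,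
            ← ENNReal.ofReal_mul hKr0, ← ENNReal.ofReal_mul hE2r0,
            ← ENNReal.ofReal_mul (by positivity), ← ENNReal.ofReal_mul (by positivity)]
        rw [e1, e2, ← ENNReal.ofReal_add (by positivity)
          (mul_nonneg (by positivity) (mul_nonneg hE2r0 (mul_nonneg hKr0 hTr0)))]
        apply ENNReal.ofReal_le_ofReal
        have h1 : 0 ≤ Hstar ^ 2 * Tr * E2r :=
          mul_nonneg (mul_nonneg (sq_nonneg _) hTr0) hE2r0
        have h2 : 0 ≤ Kr * (Hstar ^ 2 * (Tr ^ 2 / (N:ℝ))) :=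
          mul_nonneg hKr0 (by positivity)
        have hN0' : (N:ℝ) ≠ 0 := ne_of_gt hN0
        field_simp
        try rw [div_le_div_iff₀ (by positivity) (by positivity)]
        ring_nf
        nlinarith [mul_nonneg h1 (sq_nonneg (N:ℝ)),
          mul_nonneg (mul_nonneg hKr0 (by positivity : (0:ℝ) ≤ Hstar ^ 2 * Tr ^ 2)) hN0.le]
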